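/- For any binary operation ⊛ on {0,1}, if 𝒜, ℬ ⊆ 𝒫(X) are intervals, then 𝒜 ⊛ ℬ is also an interval (provided it is nonempty). -/
import Mathlib


open Set

/-- A family of sets is convex if it is closed under set-theoretic betweenness. -/
def IsConvexFam {X : Type*} (𝒜 : Set (Set X)) : Prop :=
  ∀ S ∈ 𝒜, ∀ T ∈ 𝒜, ∀ C : Set X, S ⊆ C → C ⊆ T → C ∈ 𝒜

/-- A family is dominated if its union belongs to it. -/
def IsDominatedFam {X : Type*} (𝒜 : Set (Set X)) : Prop := ⋃₀ 𝒜 ∈ 𝒜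

/-- A family is supported if it is nonempty and its intersection belongs to it. -/
def IsSupportedFam {X : Type*} (𝒜 : Set (Set X)) : Prop := 𝒜.Nonempty ∧ ⋂₀ 𝒜 ∈ 𝒜

/-- A family is an interval if it equals `[A,B] = {C | A ⊆ C ⊆ B}` for some `A ⊆ B`. -/
def IsIntervalFam {X : Type*} (𝒜 : Set (Set X)) : Prop :=
  ∃ A B : Set X, A ⊆ B ∧ 𝒜 = Set.Icc A B

/-- `𝒢` dominates `𝒜` if there are dominated convex families `𝒟 G ⊆ 𝒜` (`G ∈ 𝒢`)
with `⋃ G ∈ 𝒢, 𝒟 G = 𝒜` and `⋃₀ (𝒟 G) = G`. -/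
def DominatesFam {X : Type*} (𝒢 𝒜 : Set (Set X)) : Prop :=
  𝒢 ⊆ 𝒜 ∧ ∃ 𝒟 : Set X → Set (Set X),
    (∀ G ∈ 𝒢, 𝒟 G ⊆ 𝒜 ∧ IsConvexFam (𝒟 G) ∧ IsDominatedFam (𝒟 G) ∧ ⋃₀ (𝒟 G) = G) ∧
    (⋃ G ∈ 𝒢, 𝒟 G) = 𝒜

/-- `𝒦` supports `𝒜` if there are supported convex families `𝒮 K ⊆ 𝒜` (`K ∈ 𝒦`)
with `⋃ K ∈ 𝒦, 𝒮 K = 𝒜` and `⋂₀ (𝒮 K) = K`. -/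
def SupportsFam {X : Type*} (𝒦 𝒜 : Set (Set X)) : Prop :=
  𝒦 ⊆ 𝒜 ∧ ∃ 𝒮 : Set X → Set (Set X),
    (∀ K ∈ 𝒦, 𝒮 K ⊆ 𝒜 ∧ IsConvexFam (𝒮 K) ∧ IsSupportedFam (𝒮 K) ∧ ⋂₀ (𝒮 K) = K) ∧
    (⋃ K ∈ 𝒦, 𝒮 K) = 𝒜

/-- The upper dimension: the minimal cardinality of a dominating subfamily. -/
noncomputable def upperDim {X : Type*} (𝒜 : Set (Set X)) : ℕ∞ :=
  sInf {n : ℕ∞ | ∃ 𝒢 : Set (Set X), DominatesFam 𝒢 𝒜 ∧ 𝒢.encard = n}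

/-- The dual upper dimension: the minimal cardinality of a supporting subfamily. -/
noncomputable def dualDim {X : Type*} (𝒜 : Set (Set X)) : ℕ∞ :=
  sInf {n : ℕ∞ | ∃ 𝒦 : Set (Set X), SupportsFam 𝒦 𝒜 ∧ 𝒦.encard = n}

/-- The cylindrical dimension: the minimal number of intervals whose union is `𝒜`. -/
noncomputable def cylDim {X : Type*} (𝒜 : Set (Set X)) : ℕ∞ :=
  sInf {n : ℕ∞ | ∃ 𝕀 : Set (Set (Set X)),
    (∀ J ∈ 𝕀, IsIntervalFam J) ∧ ⋃₀ 𝕀 = 𝒜 ∧ 𝕀.encard = n}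

open Classical in
noncomputable def chiFun {X : Type*} (A : Set X) (x : X) : Bool := decide (x ∈ A)

/-- The set-theoretic operation corresponding to a binary operation on `{0,1}`. -/
noncomputable def setOp {X : Type*} (op : Bool → Bool → Bool) (A B : Set X) : Set X :=
  {x | op (chiFun A x) (chiFun B x) = true}

/-- The tensor operation on families corresponding to a binary operation on `{0,1}`. -/
noncomputable def tensorFam {X : Type*} (op : Bool → Bool → Bool)
    (𝒜 ℬ : Set (Set X)) : Set (Set X) :=
  Set.image2 (setOp op) 𝒜 ℬ

/-- The convex shadow of `A` in `𝒜`. -/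
def convexShadow {X : Type*} (𝒜 : Set (Set X)) (A : Set X) : Set (Set X) :=
  {B | B ⊆ A ∧ Set.Icc B A ⊆ 𝒜}

/-- Domain of a relation. -/
def relDom {X Y : Type*} (R : Set (X × Y)) : Set X := {x | ∃ y, (x, y) ∈ R}

/-- Range of a relation. -/
def relRg {X Y : Type*} (R : Set (X × Y)) : Set Y := {y | ∃ x, (x, y) ∈ R}

/-- The family of (partial) functions from `X` to `Y`, as sets of pairs. -/
def partialFunFam (X Y : Type*) : Set (Set (X × Y)) :=
  {f | ∀ x y y', (x, y) ∈ f → (x, y') ∈ f → y = y'}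

/-- The family of relations on `X` with disjoint domain and range. -/
def exclFam (X : Type*) : Set (Set (X × X)) :=
  {R | relDom R ∩ relRg R = ∅}

/-- The family of relations on `X` whose domain is included in their range. -/
def inclFam (X : Type*) : Set (Set (X × X)) :=
  {R | relDom R ⊆ relRg R}

/-- The family of anonymous relations: every point of the domain has two distinct images. -/
def anonFam (X Y : Type*) : Set (Set (X × Y)) :=
  {R | ∀ x ∈ relDom R, ∃ y y' : Y, y ≠ y' ∧ (x, y) ∈ R ∧ (x, y') ∈ R}

/-- The family of rectangles `A × B`. -/
def rectFam (X Y : Type*) : Set (Set (X × Y)) :=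
  {P | ∃ (A : Set X) (B : Set Y), P = A ×ˢ B}

/-- General tensor disjunction of an indexed family of families of sets. -/
def gTensorDisj {ι X : Type*} (𝒜 : ι → Set (Set X)) : Set (Set X) :=
  {U | ∃ f : ι → Set X, (∀ i, f i ∈ 𝒜 i) ∧ U = ⋃ i, f i}

/-- The Kripke operator associated to a relation `ℛ ⊆ 𝒫(Y) × 𝒫(X)^n`. -/
def kripkeOp {X Y : Type*} {n : ℕ} (ℛ : Set (Set Y × (Fin n → Set X)))
    (𝒜 : Fin n → Set (Set X)) : Set (Set Y) :=
  {B | ∃ A : Fin n → Set X, (∀ i, A i ∈ 𝒜 i) ∧ (B, A) ∈ ℛ}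

theorem stmt7 {X : Type*} (op : Bool → Bool → Bool) (𝒜 ℬ : Set (Set X))
    (hA : IsIntervalFam 𝒜) (hB : IsIntervalFam ℬ)
    (hne : (tensorFam op 𝒜 ℬ).Nonempty) :
    IsIntervalFam (tensorFam op 𝒜 ℬ) := by
  classical
  obtain ⟨A₁, A₂, hA12, rfl⟩ := hA
  obtain ⟨B₁, B₂, hB12, rfl⟩ := hB
  let P : X → Bool → Prop := fun x a => (x ∈ A₁ → a = true) ∧ (a = true → x ∈ A₂)
  let Q : X → Bool → Prop := fun x b => (x ∈ B₁ → b = true) ∧ (b = true → x ∈ B₂)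
  let S : X → Bool → Prop := fun x c => ∃ a b, P x a ∧ Q x b ∧ op a b = c
  have hPmem : ∀ A ∈ Set.Icc A₁ A₂, ∀ x, P x (chiFun A x) := by
    rintro A ⟨h1, h2⟩ x
    constructor
    · intro hx; simp only [chiFun, decide_eq_true_eq]; exact h1 hx
    · intro hx; simp only [chiFun, decide_eq_true_eq] at hx; exact h2 hx
  have hQmem : ∀ B ∈ Set.Icc B₁ B₂, ∀ x, Q x (chiFun B x) := by
    rintro B ⟨h1, h2⟩ x
    constructor
    · intro hx; simp only [chiFun, decide_eq_true_eq]; exact h1 hx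
    · intro hx; simp only [chiFun, decide_eq_true_eq] at hx; exact h2 hx
  have hSne : ∀ x, ∃ c, S x c := fun x =>
    ⟨_, chiFun A₁ x, chiFun B₁ x, hPmem A₁ ⟨le_refl _, hA12⟩ x,
      hQmem B₁ ⟨le_refl _, hB12⟩ x, rfl⟩
  refine ⟨{x | ¬ S x false}, {x | S x true}, ?_, ?_⟩
  · intro x hx
    obtain ⟨c, hc⟩ := hSne x
    cases c
    · exact absurd hc hx
    · exact hc
  · ext C
    simp only [tensorFam, Set.mem_image2]
    constructor
    · rintro ⟨A, hA, B, hB, rfl⟩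
      constructor
      · intro x hx
        simp only [setOp, Set.mem_setOf_eq]
        by_contra h
        exact hx ⟨_, _, hPmem A hA x, hQmem B hB x, by
          cases hop : op (chiFun A x) (chiFun B x)
          · rfl
          · exact absurd hop h⟩
      · intro x hx
        exact ⟨_, _, hPmem A hA x, hQmem B hB x, hx⟩
    · rintro ⟨hL, hU⟩
      have hchoice : ∀ x, ∃ a b, P x a ∧ Q x b ∧ (op a b = true ↔ x ∈ C) := by
        intro x
        by_cases hx : x ∈ C
        · obtain ⟨a, b, ha, hb, hab⟩ := hU hx
          exact ⟨a, b, ha, hb, by simp [hab, hx]⟩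
        · have hf : S x false := by
            by_contra h
            exact hx (hL h)
          obtain ⟨a, b, ha, hb, hab⟩ := hf
          exact ⟨a, b, ha, hb, by simp [hab, hx]⟩
      choose a b ha hb hab using hchoice
      refine ⟨{x | a x = true}, ⟨?_, ?_⟩, {x | b x = true}, ⟨?_, ?_⟩, ?_⟩
      · intro x hx; exact (ha x).1 hx
      · intro x hx; exact (ha x).2 hx
      · intro x hx; exact (hb x).1 hx
      · intro x hx; exact (hb x).2 hx
      · ext x
        simp only [setOp, Set.mem_setOf_eq, chiFun, Set.mem_setOf_eq, decide_eq_true_eq,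
          Bool.decide_coe]
        exact hab x
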